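/- Let g : ℝ → ℝ be the hat function g(x) = 2·max(x,0) − 4·max(x−1/2,0) + 2·max(x−1,0) and let g_s be its s-fold composition. Then for every s ∈ ℕ, k ∈ {0,…,2^{s−1}−1}, and x ∈ [0, 2^{−(s−1)}], it holds that g_s(k·2^{−(s−1)} + x) = g_s((k+1)·2^{−(s−1)} − x). -/

import Mathlib

/-- The "hat function" `g(x) = 2·max(x,0) − 4·max(x−1/2,0) + 2·max(x−1,0)`. -/
noncomputable def hatg (x : ℝ) : ℝ :=
  2 * max x 0 - 4 * max (x - 1/2) 0 + 2 * max (x - 1) 0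

set_option maxHeartbeats 1000000 in
lemma hatg_reflect (x : ℝ) : hatg x = hatg (1 - x) := by
  unfold hatg
  simp only [max_def]
  split_ifs <;> linarith

lemma hatg_left {y : ℝ} (h0 : 0 ≤ y) (h1 : y ≤ 1/2) : hatg y = 2 * y := by
  unfold hatg
  rw [max_eq_left (by linarith), max_eq_right (by linarith), max_eq_right (by linarith)]
  ring

lemma hatg_right {y : ℝ} (h0 : 1/2 ≤ y) (h1 : y ≤ 1) : hatg y = 2 - 2 * y := by
  unfold hatg
  rw [max_eq_left (by linarith), max_eq_left (by linarith), max_eq_right (by linarith)]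
  ring

lemma aux (n : ℕ) : ∀ k : ℕ, k < 2 ^ n → ∀ x : ℝ, 0 ≤ x → x ≤ ((2:ℝ) ^ n)⁻¹ →
    hatg^[n+1] ((k : ℝ) * ((2:ℝ) ^ n)⁻¹ + x)
      = hatg^[n+1] (((k : ℝ) + 1) * ((2:ℝ) ^ n)⁻¹ - x) := by
  induction n with
  | zero =>
      intro k hk x hx0 hx1
      interval_cases k
      norm_num
      exact hatg_reflect x
  | succ n ih =>
      intro k hk x hx0 hx1
      have hP : (0:ℝ) < 2 ^ n := by positivity
      have hP1 : ((2:ℝ) ^ (n+1)) = 2 ^ n * 2 := by ring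
      rw [hP1] at hx1 ⊢
      have hq : (0:ℝ) < ((2:ℝ) ^ n * 2)⁻¹ := by positivity
      have hhalf : (2:ℝ) ^ n * ((2:ℝ) ^ n * 2)⁻¹ = 1/2 := by field_simp
      have hone : ((2:ℝ) ^ n * 2) * ((2:ℝ) ^ n * 2)⁻¹ = 1 := by field_simp
      simp only [Function.iterate_succ_apply]
      have hkx : (2:ℝ) * x ≤ ((2:ℝ) ^ n)⁻¹ := by
        rw [mul_inv] at hx1; linarith
      rcases lt_or_ge k (2 ^ n) with hcase | hcase
      · have hkR' : ((k : ℝ) + 1) ≤ 2 ^ n := by exact_mod_cast hcase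
        have hm1 := mul_le_mul_of_nonneg_right hkR' hq.le
        have hm0 := mul_le_mul_of_nonneg_right
          (show (1:ℝ) ≤ (k:ℝ) + 1 by have := Nat.cast_nonneg (α := ℝ) k; linarith) hq.le
        have e1 : hatg ((k:ℝ) * ((2:ℝ)^n * 2)⁻¹ + x) = (k:ℝ) * ((2:ℝ)^n)⁻¹ + 2 * x := by
          rw [hatg_left (by positivity) (by nlinarith)]
          field_simp
        have e2 : hatg (((k:ℝ) + 1) * ((2:ℝ)^n * 2)⁻¹ - x)
            = ((k:ℝ) + 1) * ((2:ℝ)^n)⁻¹ - 2 * x := by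
          rw [hatg_left (by nlinarith) (by nlinarith)]
          field_simp
        rw [e1, e2]
        have H := ih k hcase (2 * x) (by linarith) hkx
        simpa only [Function.iterate_succ_apply] using H
      · have hkRlo : ((2:ℝ) ^ n) ≤ (k : ℝ) := by exact_mod_cast hcase
        have hkR2 : ((k : ℝ) + 1) ≤ 2 ^ n * 2 := by
          rw [← hP1]; exact_mod_cast hk
        set k' : ℕ := 2 ^ (n+1) - 1 - k with hk'def
        have hk'lt : k' < 2 ^ n := by
          have h2 : 2 ^ (n+1) = 2 ^ n * 2 := by ring
          omega
        have hk'cast : (k' : ℝ) = 2 ^ n * 2 - 1 - k := by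
          rw [hk'def, Nat.sub_sub, Nat.cast_sub (by omega)]
          push_cast
          ring
        have hm2 := mul_le_mul_of_nonneg_right hkRlo hq.le
        have hm3 := mul_le_mul_of_nonneg_right hkR2 hq.le
        have e1 : hatg ((k:ℝ) * ((2:ℝ)^n * 2)⁻¹ + x)
            = ((k':ℝ) + 1) * ((2:ℝ)^n)⁻¹ - 2 * x := by
          rw [hatg_right (by nlinarith) (by nlinarith), hk'cast]
          field_simp; ring
        have e2 : hatg (((k:ℝ) + 1) * ((2:ℝ)^n * 2)⁻¹ - x)
            = (k':ℝ) * ((2:ℝ)^n)⁻¹ + 2 * x := by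
          rw [hatg_right (by nlinarith) (by nlinarith), hk'cast]
          field_simp; ring
        rw [e1, e2]
        have H := (ih k' hk'lt (2 * x) (by linarith) hkx).symm
        simpa only [Function.iterate_succ_apply] using H

/-- Reflection symmetry of the sawtooth function: for `s ≥ 1`, `k < 2^{s−1}` and
`x ∈ [0, 2^{−(s−1)}]`, `g_s(k·2^{−(s−1)} + x) = g_s((k+1)·2^{−(s−1)} − x)`. -/
theorem stmt1 (s : ℕ) (hs : 1 ≤ s) (k : ℕ) (hk : k < 2 ^ (s - 1)) (x : ℝ)
    (hx : x ∈ Set.Icc (0:ℝ) (((2:ℝ) ^ (s - 1))⁻¹)) :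
    hatg^[s] ((k : ℝ) * ((2:ℝ) ^ (s - 1))⁻¹ + x)
      = hatg^[s] (((k : ℝ) + 1) * ((2:ℝ) ^ (s - 1))⁻¹ - x) := by
  obtain ⟨n, rfl⟩ : ∃ n, s = n + 1 := ⟨s - 1, (Nat.succ_pred_eq_of_pos hs).symm⟩
  simpa using aux n k (by simpa using hk) x hx.1 (by simpa using hx.2)
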